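/- The polynomial f_{E_8}(t) = 1 − 128t + 2408t² − 17936t³ + 67488t⁴ − 140448t⁵ + 163856t⁶ − 100320t⁷ + 25080t⁸ has exactly 8 distinct real roots, all lying in the open interval (0,1). -/

import Mathlib

noncomputable def fE8 (t : ℝ) : ℝ :=
  1 - 128 * t + 2408 * t ^ 2 - 17936 * t ^ 3 + 67488 * t ^ 4 - 140448 * t ^ 5
    + 163856 * t ^ 6 - 100320 * t ^ 7 + 25080 * t ^ 8

open Polynomial in
noncomputable def PE8 : Polynomial ℝ :=
  C 1 + C (-128) * X + C 2408 * X ^ 2 + C (-17936) * X ^ 3 + C 67488 * X ^ 4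
    + C (-140448) * X ^ 5 + C 163856 * X ^ 6 + C (-100320) * X ^ 7 + C 25080 * X ^ 8

lemma PE8_eval (x : ℝ) : PE8.eval x = fE8 x := by
  simp [PE8, fE8]; ring

lemma PE8_ne_zero : PE8 ≠ 0 := by
  intro h
  have := PE8_eval 0
  rw [h] at this
  simp [fE8] at this

lemma PE8_natDegree : PE8.natDegree = 8 := by
  unfold PE8
  compute_degree!

lemma fE8_cont : Continuous fE8 := by
  unfold fE8; continuity

lemma ivt_pos_neg {a b : ℝ} (hab : a ≤ b) (ha : 0 < fE8 a) (hb : fE8 b < 0) :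
    ∃ x, a < x ∧ x < b ∧ fE8 x = 0 := by
  have h := intermediate_value_Ioo' hab fE8_cont.continuousOn
  have : (0 : ℝ) ∈ Set.Ioo (fE8 b) (fE8 a) := ⟨hb, ha⟩
  obtain ⟨x, hx, hfx⟩ := h this
  exact ⟨x, hx.1, hx.2, hfx⟩

lemma ivt_neg_pos {a b : ℝ} (hab : a ≤ b) (ha : fE8 a < 0) (hb : 0 < fE8 b) :
    ∃ x, a < x ∧ x < b ∧ fE8 x = 0 := by
  have h := intermediate_value_Ioo hab fE8_cont.continuousOn
  have : (0 : ℝ) ∈ Set.Ioo (fE8 a) (fE8 b) := ⟨ha, hb⟩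
  obtain ⟨x, hx, hfx⟩ := h this
  exact ⟨x, hx.1, hx.2, hfx⟩

theorem fE8_roots : ∃ S : Finset ℝ, S.card = 8 ∧ (∀ x : ℝ, fE8 x = 0 ↔ x ∈ S) ∧
    ∀ x ∈ S, 0 < x ∧ x < 1 := by
  have e0 : (0:ℝ) < fE8 0 := by norm_num [fE8]
  have e1 : fE8 (1/64) < 0 := by norm_num [fE8]
  have e2 : (0:ℝ) < fE8 (7/64) := by norm_num [fE8]
  have e3 : fE8 (1/4) < 0 := by norm_num [fE8]
  have e4 : (0:ℝ) < fE8 (1/2) := by norm_num [fE8]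
  have e5 : fE8 (3/4) < 0 := by norm_num [fE8]
  have e6 : (0:ℝ) < fE8 (57/64) := by norm_num [fE8]
  have e7 : fE8 (63/64) < 0 := by norm_num [fE8]
  have e8 : (0:ℝ) < fE8 1 := by norm_num [fE8]
  obtain ⟨x1, hx1a, hx1b, hx1⟩ := ivt_pos_neg (by norm_num) e0 e1
  obtain ⟨x2, hx2a, hx2b, hx2⟩ := ivt_neg_pos (by norm_num) e1 e2
  obtain ⟨x3, hx3a, hx3b, hx3⟩ := ivt_pos_neg (by norm_num) e2 e3
  obtain ⟨x4, hx4a, hx4b, hx4⟩ := ivt_neg_pos (by norm_num) e3 e4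
  obtain ⟨x5, hx5a, hx5b, hx5⟩ := ivt_pos_neg (by norm_num) e4 e5
  obtain ⟨x6, hx6a, hx6b, hx6⟩ := ivt_neg_pos (by norm_num) e5 e6
  obtain ⟨x7, hx7a, hx7b, hx7⟩ := ivt_pos_neg (by norm_num) e6 e7
  obtain ⟨x8, hx8a, hx8b, hx8⟩ := ivt_neg_pos (by norm_num) e7 e8
  set S : Finset ℝ := PE8.roots.toFinset with hS
  have hmem : ∀ x : ℝ, x ∈ S ↔ fE8 x = 0 := by
    intro x
    rw [hS, Multiset.mem_toFinset, Polynomial.mem_roots PE8_ne_zero,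
      Polynomial.IsRoot, PE8_eval]
  -- the eight roots are distinct and in S
  have h12 : x1 < x2 := by linarith
  have h23 : x2 < x3 := by linarith
  have h34 : x3 < x4 := by linarith
  have h45 : x4 < x5 := by linarith
  have h56 : x5 < x6 := by linarith
  have h67 : x6 < x7 := by linarith
  have h78 : x7 < x8 := by linarith
  have hch : List.Chain' (· < ·) [x1, x2, x3, x4, x5, x6, x7, x8] := by
    simp only [List.Chain', List.isChain_cons_cons, List.isChain_singleton, and_true]
    exact ⟨h12, h23, h34, h45, h56, h67, h78⟩
  have hnd : ([x1, x2, x3, x4, x5, x6, x7, x8] : List ℝ).Nodup :=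
    (List.isChain_iff_pairwise.mp hch).imp ne_of_lt
  set T : Finset ℝ := ⟨([x1, x2, x3, x4, x5, x6, x7, x8] : List ℝ), Multiset.coe_nodup.mpr hnd⟩
    with hT
  have hmemT : ∀ x : ℝ, x ∈ T ↔ x = x1 ∨ x = x2 ∨ x = x3 ∨ x = x4 ∨ x = x5 ∨ x = x6
      ∨ x = x7 ∨ x = x8 := by
    intro x
    rw [hT]
    simp [Finset.mem_mk]
  have hTS : T ⊆ S := by
    intro x hx
    rw [hmem]
    rcases (hmemT x).mp hx with rfl|rfl|rfl|rfl|rfl|rfl|rfl|rfl <;> assumption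
  have hTcard : T.card = 8 := rfl
  have hScard : S.card ≤ 8 := by
    calc S.card ≤ Multiset.card PE8.roots := PE8.roots.toFinset_card_le
    _ ≤ PE8.natDegree := PE8.card_roots'
    _ = 8 := PE8_natDegree
  have hST : S = T := (Finset.eq_of_subset_of_card_le hTS (by omega)).symm
  refine ⟨S, ?_, ?_, ?_⟩
  · rw [hST]; exact hTcard
  · intro x; rw [hmem]
  · intro x hx
    rw [hST] at hx
    rcases (hmemT x).mp hx with rfl|rfl|rfl|rfl|rfl|rfl|rfl|rfl <;> constructor <;> linarith
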